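/- Let k ∈ L²(ℝ³×ℝ³; ℂ) with ‖k‖₂ > 0, and suppose M := max( esssup_x ‖k(x,·)‖_{L²(ℝ³)}, esssup_y ‖k(·,y)‖_{L²(ℝ³)} ) < ∞. Then for almost every (x,y) ∈ ℝ³×ℝ³ the series r(x,y) := Σ_{n≥1} (1/(2n+1)!) ((k∘k̄)ⁿ∘k)(x,y) converges absolutely and satisfies |r(x,y)| ≤ M² ( sinh(‖k‖₂) − ‖k‖₂ ) / ‖k‖₂². -/

import Mathlib

open MeasureTheory Real
open scoped ENNReal

noncomputable section

abbrev E3 : Type := EuclideanSpace ℝ (Fin 3)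

/-- Composition of integral kernels: `(k₁∘k₂)(x,y) = ∫ k₁(x,z) k₂(z,y) dz`. -/
def kComp (k₁ k₂ : E3 × E3 → ℂ) : E3 × E3 → ℂ :=
  fun p => ∫ z : E3, k₁ (p.1, z) * k₂ (z, p.2)

/-- Pointwise complex conjugate of a kernel. -/
def kConj (k : E3 × E3 → ℂ) : E3 × E3 → ℂ := fun p => starRingEnd ℂ (k p)

/-- `kChain k n = (k∘k̄)ⁿ∘k`. -/
def kChain (k : E3 × E3 → ℂ) : ℕ → E3 × E3 → ℂ
  | 0 => k
  | n + 1 => kComp k (kComp (kConj k) (kChain k n))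

namespace Stmt16Aux

/-- The product measure on `E3 × E3`. -/
def μ2 : Measure (E3 × E3) := (volume : Measure E3).prod (volume : Measure E3)

lemma volume_eq_μ2 : (volume : Measure (E3 × E3)) = μ2 := Measure.volume_eq_prod E3 E3

/-- `ℝ≥0∞`-valued kernel composition. -/
def LComp (A B : E3 × E3 → ℝ≥0∞) : E3 × E3 → ℝ≥0∞ :=
  fun p => ∫⁻ z : E3, A (p.1, z) * B (z, p.2)

def LChain (K : E3 × E3 → ℝ≥0∞) : ℕ → E3 × E3 → ℝ≥0∞
  | 0 => K
  | n + 1 => LComp K (LComp K (LChain K n))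

lemma measurable_LComp {A B : E3 × E3 → ℝ≥0∞} (hA : Measurable A) (hB : Measurable B) :
    Measurable (LComp A B) := by
  have : Measurable (fun q : (E3 × E3) × E3 => A (q.1.1, q.2) * B (q.2, q.1.2)) := by fun_prop
  exact this.lintegral_prod_right'

lemma measurable_LChain {K : E3 × E3 → ℝ≥0∞} (hK : Measurable K) :
    ∀ n, Measurable (LChain K n)
  | 0 => hK
  | n + 1 => measurable_LComp hK (measurable_LComp hK (measurable_LChain hK n))

lemma rpow_two' (x : ℝ≥0∞) : x ^ (2 : ℝ) = x ^ 2 := by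
  rw [show (2:ℝ) = ((2:ℕ):ℝ) by norm_num, ENNReal.rpow_natCast]

lemma sqsqrt (c : ℝ≥0∞) : (c ^ (1/2 : ℝ)) ^ 2 = c := by
  rw [← rpow_two', ← ENNReal.rpow_mul]; norm_num

lemma sqrtsq (c : ℝ≥0∞) : (c ^ 2) ^ (1/2 : ℝ) = c := by
  rw [← rpow_two', ← ENNReal.rpow_mul]; norm_num

lemma lint_CS {f g : E3 → ℝ≥0∞} (hf : Measurable f) (hg : Measurable g) :
    ∫⁻ z, f z * g z ≤ (∫⁻ z, f z ^ 2) ^ (1/2 : ℝ) * (∫⁻ z, g z ^ 2) ^ (1/2 : ℝ) := by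
  have h := ENNReal.lintegral_mul_le_Lp_mul_Lq (volume : Measure E3) (p := 2) (q := 2)
    Real.HolderConjugate.two_two hf.aemeasurable hg.aemeasurable
  simpa [Pi.mul_apply, rpow_two'] using h

variable {K B : E3 × E3 → ℝ≥0∞}

/-- Pointwise Cauchy–Schwarz bound for a kernel composition. -/
lemma LComp_le (hK : Measurable K) (hB : Measurable B) (p : E3 × E3) :
    LComp K B p ≤
      (∫⁻ z, K (p.1, z) ^ 2) ^ (1/2 : ℝ) * (∫⁻ z, B (z, p.2) ^ 2) ^ (1/2 : ℝ) :=
  lint_CS (by fun_prop) (by fun_prop)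

/-- One step of the column `L²` bound. -/
lemma GCstep (hK : Measurable K) (hB : Measurable B) (y : E3) :
    ∫⁻ x, (LComp K B (x, y)) ^ 2 ≤
      (∫⁻ p, K p ^ 2 ∂μ2) * ∫⁻ z, B (z, y) ^ 2 := by
  have hpt : ∀ x, (LComp K B (x, y)) ^ 2 ≤ (∫⁻ z, K (x, z) ^ 2) * ∫⁻ z, B (z, y) ^ 2 := by
    intro x
    calc (LComp K B (x, y)) ^ 2
        ≤ ((∫⁻ z, K (x, z) ^ 2) ^ (1/2 : ℝ) * (∫⁻ z, B (z, y) ^ 2) ^ (1/2 : ℝ)) ^ 2 :=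
          pow_le_pow_left' (LComp_le hK hB (x, y)) 2
      _ = (∫⁻ z, K (x, z) ^ 2) * ∫⁻ z, B (z, y) ^ 2 := by
          rw [mul_pow, sqsqrt, sqsqrt]
  calc ∫⁻ x, (LComp K B (x, y)) ^ 2
      ≤ ∫⁻ x, (∫⁻ z, K (x, z) ^ 2) * ∫⁻ z, B (z, y) ^ 2 := lintegral_mono hpt
    _ = (∫⁻ x, ∫⁻ z, K (x, z) ^ 2) * ∫⁻ z, B (z, y) ^ 2 :=
        lintegral_mul_const _ ((by fun_prop : Measurable fun q : E3 × E3 => K q ^ 2).lintegral_prod_right')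
    _ = (∫⁻ p, K p ^ 2 ∂μ2) * ∫⁻ z, B (z, y) ^ 2 := by
        rw [μ2, lintegral_prod _ (by fun_prop : Measurable fun p : E3 × E3 => K p ^ 2).aemeasurable]

/-- Iterated column bound. -/
lemma GC_le (hK : Measurable K) (n : ℕ) (y : E3) :
    ∫⁻ x, (LChain K n (x, y)) ^ 2 ≤
      (∫⁻ p, K p ^ 2 ∂μ2) ^ (2 * n) * ∫⁻ x, K (x, y) ^ 2 := by
  induction n with
  | zero => simp [LChain]
  | succ n ih =>
      set T := (∫⁻ p, K p ^ 2 ∂μ2) with hT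
      calc ∫⁻ x, (LChain K (n+1) (x, y)) ^ 2
          ≤ T * ∫⁻ z, (LComp K (LChain K n) (z, y)) ^ 2 :=
            GCstep hK (measurable_LComp hK (measurable_LChain hK n)) y
        _ ≤ T * (T * ∫⁻ z, (LChain K n (z, y)) ^ 2) :=
            mul_le_mul_right (GCstep hK (measurable_LChain hK n) y) T
        _ ≤ T * (T * (T ^ (2 * n) * ∫⁻ x, K (x, y) ^ 2)) :=
            mul_le_mul_right (mul_le_mul_right ih T) T
        _ = T ^ (2 * (n + 1)) * ∫⁻ x, K (x, y) ^ 2 := by ring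

lemma ae_fst {P : E3 → Prop} (h : ∀ᵐ x : E3, P x) : ∀ᵐ p ∂μ2, P p.1 :=
  (Measure.quasiMeasurePreserving_fst
    (μ := (volume : Measure E3)) (ν := (volume : Measure E3))).tendsto_ae.eventually h

lemma ae_snd {P : E3 → Prop} (h : ∀ᵐ y : E3, P y) : ∀ᵐ p ∂μ2, P p.2 :=
  (Measure.quasiMeasurePreserving_snd
    (μ := (volume : Measure E3)) (ν := (volume : Measure E3))).tendsto_ae.eventually h

lemma ae_swap {P : E3 × E3 → Prop} (h : ∀ᵐ p ∂μ2, P p) : ∀ᵐ p ∂μ2, P (p.2, p.1) :=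
  (Measure.measurePreserving_swap (μ := (volume : Measure E3))
    (ν := (volume : Measure E3))).quasiMeasurePreserving.tendsto_ae.eventually h

end Stmt16Aux

open Stmt16Aux

set_option maxHeartbeats 1000000

/-- Let `k ∈ L²(ℝ³×ℝ³)` with `‖k‖₂ > 0` and with rows and columns essentially bounded in
`L²` by `M`.  Then for a.e. `(x,y)` the series `r(x,y) = Σ_{n≥1}(1/(2n+1)!)((k∘k̄)ⁿ∘k)(x,y)`
converges absolutely and `|r(x,y)| ≤ M²(sinh(‖k‖₂) − ‖k‖₂)/‖k‖₂²`. -/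
theorem stmt16 (k : E3 × E3 → ℂ) (hk : MemLp k 2 (volume : Measure (E3 × E3)))
    (hkpos : 0 < Real.sqrt (∫ q : E3 × E3, ‖k q‖ ^ 2))
    (M : ℝ) (hM0 : 0 ≤ M)
    (hrow : ∀ᵐ x : E3, (∫ z : E3, ‖k (x, z)‖ ^ 2) ≤ M ^ 2)
    (hcol : ∀ᵐ y : E3, (∫ z : E3, ‖k (z, y)‖ ^ 2) ≤ M ^ 2) :
    ∀ᵐ p : E3 × E3,
      Summable (fun n : ℕ =>
        ‖((Nat.factorial (2 * (n + 1) + 1) : ℂ))⁻¹ * kChain k (n + 1) p‖) ∧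
      ‖∑' n : ℕ, ((Nat.factorial (2 * (n + 1) + 1) : ℂ))⁻¹ * kChain k (n + 1) p‖ ≤
        M ^ 2 * (Real.sinh (Real.sqrt (∫ q : E3 × E3, ‖k q‖ ^ 2))
            - Real.sqrt (∫ q : E3 × E3, ‖k q‖ ^ 2))
          / Real.sqrt (∫ q : E3 × E3, ‖k q‖ ^ 2) ^ 2 := by
  classical
  set I : ℝ := ∫ q : E3 × E3, ‖k q‖ ^ 2 with hI
  set L : ℝ := Real.sqrt I with hLdef
  have hL0 : 0 < L := hkpos
  have hI0 : 0 ≤ I := integral_nonneg fun q => by positivity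
  have hIL : I = L ^ 2 := (Real.sq_sqrt hI0).symm
  -- measurable representative
  set g : E3 × E3 → ℂ := hk.1.mk k with hgdef
  have hg : StronglyMeasurable g := hk.1.stronglyMeasurable_mk
  have keq : k =ᵐ[μ2] g := volume_eq_μ2 ▸ hk.1.ae_eq_mk
  set K : E3 × E3 → ℝ≥0∞ := fun p => (‖g p‖₊ : ℝ≥0∞) with hKdef
  have hKm : Measurable K := hg.measurable.nnnorm.coe_nnreal_ennreal
  have hsec : ∀ᵐ x : E3, ∀ᵐ z : E3, k (x, z) = g (x, z) := Measure.ae_ae_of_ae_prod keq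
  have hsec' : ∀ᵐ y : E3, ∀ᵐ z : E3, k (z, y) = g (z, y) :=
    Measure.ae_ae_of_ae_prod (ae_swap keq)
  -- the total L² mass
  set T : ℝ≥0∞ := ∫⁻ p, K p ^ 2 ∂μ2 with hTdef
  have hInt : Integrable (fun q : E3 × E3 => ‖k q‖ ^ 2) := by
    have h := hk.integrable_norm_rpow (by norm_num) (by norm_num)
    simpa [ENNReal.toReal_ofNat, Real.rpow_natCast] using h
  have hTval : T = ENNReal.ofReal I := by
    rw [hTdef, hI]
    rw [ofReal_integral_eq_lintegral_ofReal hInt (Filter.Eventually.of_forall fun q => by positivity)]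
    rw [volume_eq_μ2]
    refine lintegral_congr_ae ?_
    filter_upwards [keq] with q hq
    rw [hq, ENNReal.ofReal_pow (norm_nonneg _), ofReal_norm, enorm_eq_nnnorm]
  have hTne : T ≠ ∞ := by rw [hTval]; exact ENNReal.ofReal_ne_top
  set a : ℝ≥0∞ := ENNReal.ofReal M with hadef
  set b : ℝ≥0∞ := ENNReal.ofReal L with hbdef
  have hTb : T = b ^ 2 := by
    rw [hTval, hIL, hbdef, ENNReal.ofReal_pow (Real.sqrt_nonneg _)]
  -- row bound for K
  have hrowK : ∀ᵐ x : E3, (∫⁻ z, K (x, z) ^ 2) ≤ a ^ 2 := by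
    have hmeas : Measurable fun x : E3 => ∫⁻ z, K (x, z) ^ 2 :=
      (by fun_prop : Measurable fun q : E3 × E3 => K q ^ 2).lintegral_prod_right'
    have hfin : ∀ᵐ x : E3, (∫⁻ z, K (x, z) ^ 2) < ∞ := by
      refine ae_lt_top hmeas ?_
      rw [← lintegral_prod _ (by fun_prop : Measurable fun q : E3 × E3 => K q ^ 2).aemeasurable]
      exact hTne
    filter_upwards [hfin, hrow, hsec] with x hx hxr hxe
    have hgm : AEStronglyMeasurable (fun z : E3 => ‖k (x, z)‖ ^ 2) volume := by
      refine ((hg.measurable.comp (measurable_prodMk_left (x := x))).norm.pow_const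
        2).stronglyMeasurable.aestronglyMeasurable.congr ?_
      filter_upwards [hxe] with z hz
      simp [hz]
    have h2 : ∫ z, ‖k (x, z)‖ ^ 2 = (∫⁻ z, K (x, z) ^ 2).toReal := by
      rw [integral_eq_lintegral_of_nonneg_ae
        (Filter.Eventually.of_forall fun z => by positivity) hgm]
      congr 1
      refine lintegral_congr_ae ?_
      filter_upwards [hxe] with z hz
      rw [hz, ENNReal.ofReal_pow (norm_nonneg _), ofReal_norm, enorm_eq_nnnorm]
    have := (ENNReal.le_ofReal_iff_toReal_le hx.ne (by positivity : (0:ℝ) ≤ M ^ 2)).2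
      (by rw [← h2]; exact hxr)
    rwa [ENNReal.ofReal_pow hM0] at this
  -- column bound for K
  have hcolK : ∀ᵐ y : E3, (∫⁻ z, K (z, y) ^ 2) ≤ a ^ 2 := by
    have hmeas : Measurable fun y : E3 => ∫⁻ z, K (z, y) ^ 2 :=
      (by fun_prop : Measurable fun q : E3 × E3 => K q ^ 2).lintegral_prod_left'
    have hfin : ∀ᵐ y : E3, (∫⁻ z, K (z, y) ^ 2) < ∞ := by
      refine ae_lt_top hmeas ?_
      rw [← lintegral_prod_symm _ (by fun_prop : Measurable fun q : E3 × E3 => K q ^ 2).aemeasurable]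
      exact hTne
    filter_upwards [hfin, hcol, hsec'] with y hy hyr hye
    have hgm : AEStronglyMeasurable (fun z : E3 => ‖k (z, y)‖ ^ 2) volume := by
      refine ((hg.measurable.comp (measurable_prodMk_right (y := y))).norm.pow_const
        2).stronglyMeasurable.aestronglyMeasurable.congr ?_
      filter_upwards [hye] with z hz
      simp [hz]
    have h2 : ∫ z, ‖k (z, y)‖ ^ 2 = (∫⁻ z, K (z, y) ^ 2).toReal := by
      rw [integral_eq_lintegral_of_nonneg_ae
        (Filter.Eventually.of_forall fun z => by positivity) hgm]
      congr 1
      refine lintegral_congr_ae ?_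
      filter_upwards [hye] with z hz
      rw [hz, ENNReal.ofReal_pow (norm_nonneg _), ofReal_norm, enorm_eq_nnnorm]
    have := (ENNReal.le_ofReal_iff_toReal_le hy.ne (by positivity : (0:ℝ) ≤ M ^ 2)).2
      (by rw [← h2]; exact hyr)
    rwa [ENNReal.ofReal_pow hM0] at this
  -- domination of the complex chain by the ℝ≥0∞ chain
  have dom : ∀ n, ∀ᵐ p ∂μ2, (‖kChain k n p‖₊ : ℝ≥0∞) ≤ LChain K n p := by
    intro n
    induction n with
    | zero =>
        filter_upwards [keq] with p hp
        simp only [kChain, LChain, hKdef, hp]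
        exact le_rfl
    | succ n ih =>
        have inner : ∀ᵐ q ∂μ2,
            (‖kComp (kConj k) (kChain k n) q‖₊ : ℝ≥0∞) ≤ LComp K (LChain K n) q := by
          filter_upwards [ae_fst hsec, ae_snd (Measure.ae_ae_of_ae_prod (ae_swap ih))]
            with q h1 h2
          calc (‖kComp (kConj k) (kChain k n) q‖₊ : ℝ≥0∞)
              ≤ ∫⁻ w, (‖kConj k (q.1, w) * kChain k n (w, q.2)‖₊ : ℝ≥0∞) :=
                enorm_integral_le_lintegral_enorm _
            _ ≤ LComp K (LChain K n) q := by
                refine lintegral_mono_ae ?_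
                filter_upwards [h1, h2] with w e1 e2
                rw [nnnorm_mul, ENNReal.coe_mul]
                refine mul_le_mul' (le_of_eq ?_) e2
                simp [kConj, hKdef, e1]
        filter_upwards [ae_fst hsec, ae_snd (Measure.ae_ae_of_ae_prod (ae_swap inner))]
          with p h1 h2
        calc (‖kChain k (n+1) p‖₊ : ℝ≥0∞)
            ≤ ∫⁻ z, (‖k (p.1, z) * kComp (kConj k) (kChain k n) (z, p.2)‖₊ : ℝ≥0∞) :=
              enorm_integral_le_lintegral_enorm _
          _ ≤ LChain K (n+1) p := by
              refine lintegral_mono_ae ?_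
              filter_upwards [h1, h2] with z e1 e2
              rw [nnnorm_mul, ENNReal.coe_mul]
              exact mul_le_mul' (le_of_eq (by simp [hKdef, e1])) e2
  -- the key pointwise bound on the ℝ≥0∞ chain
  have key : ∀ n, ∀ᵐ p ∂μ2, LChain K (n+1) p ≤ a ^ 2 * b ^ (2*n+1) := by
    intro n
    have hGCy : ∀ᵐ y : E3, (∫⁻ x, LChain K n (x, y) ^ 2) ≤ b ^ (4*n) * a ^ 2 := by
      filter_upwards [hcolK] with y hy
      calc ∫⁻ x, LChain K n (x, y) ^ 2
          ≤ T ^ (2*n) * ∫⁻ x, K (x, y) ^ 2 := GC_le hKm n y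
        _ ≤ T ^ (2*n) * a ^ 2 := mul_le_mul_right hy _
        _ = b ^ (4*n) * a ^ 2 := by rw [hTb, ← pow_mul]; ring_nf
    filter_upwards [ae_fst hrowK, ae_snd hGCy] with p h1 h2
    calc LChain K (n+1) p
        ≤ (∫⁻ z, K (p.1, z) ^ 2) ^ (1/2:ℝ) *
            (∫⁻ z, (LComp K (LChain K n)) (z, p.2) ^ 2) ^ (1/2:ℝ) :=
          LComp_le hKm (measurable_LComp hKm (measurable_LChain hKm n)) p
      _ ≤ (a ^ 2) ^ (1/2:ℝ) * (b ^ 2 * (b ^ (4*n) * a ^ 2)) ^ (1/2:ℝ) := by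
          refine mul_le_mul' (ENNReal.rpow_le_rpow h1 (by norm_num)) ?_
          refine ENNReal.rpow_le_rpow ?_ (by norm_num)
          calc ∫⁻ z, (LComp K (LChain K n)) (z, p.2) ^ 2
              ≤ T * ∫⁻ z, LChain K n (z, p.2) ^ 2 := GCstep hKm (measurable_LChain hKm n) p.2
            _ ≤ T * (b ^ (4*n) * a ^ 2) := mul_le_mul_right h2 T
            _ = b ^ 2 * (b ^ (4*n) * a ^ 2) := by rw [hTb]
      _ = a ^ 2 * b ^ (2*n+1) := by
          rw [show b ^ 2 * (b ^ (4*n) * a ^ 2) = (b ^ (2*n+1) * a) ^ 2 by ring,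
            sqrtsq, sqrtsq]
          ring
  -- combine: real bound on the chain, for a.e. p simultaneously in n
  have hreal : ∀ᵐ p ∂μ2, ∀ n : ℕ, ‖kChain k (n+1) p‖ ≤ M ^ 2 * L ^ (2*n+1) := by
    rw [MeasureTheory.ae_all_iff]
    intro n
    filter_upwards [dom (n+1), key n] with p h1 h2
    have h3 : (‖kChain k (n+1) p‖₊ : ℝ≥0∞) ≤ ENNReal.ofReal (M ^ 2 * L ^ (2*n+1)) := by
      refine h1.trans (h2.trans (le_of_eq ?_))
      rw [ENNReal.ofReal_mul (by positivity), ENNReal.ofReal_pow hM0,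
        ENNReal.ofReal_pow (Real.sqrt_nonneg _)]
    rw [← enorm_eq_nnnorm, ← ofReal_norm] at h3
    exact (ENNReal.ofReal_le_ofReal_iff (by positivity)).1 h3
  -- final pointwise argument
  rw [volume_eq_μ2]
  filter_upwards [hreal] with p hp
  set d : ℕ → ℝ := fun m => L ^ (2*m+1) / ((2*m+1).factorial : ℝ) with hddef
  have hd : HasSum d (Real.sinh L) := Real.hasSum_sinh L
  have hde : Summable (fun n => d (n+1)) := (summable_nat_add_iff 1).2 hd.summable
  have hdsum : ∑' n, d (n+1) = Real.sinh L - L := by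
    have h0 := hd.tsum_eq
    have h1 : ∑' n, d n = d 0 + ∑' n, d (n+1) := hd.summable.tsum_eq_zero_add
    have hd0 : d 0 = L := by simp [hddef, Nat.factorial]
    rw [h0, hd0] at h1
    linarith
  set t : ℕ → ℝ := fun n => ‖((Nat.factorial (2 * (n + 1) + 1) : ℂ))⁻¹ * kChain k (n + 1) p‖
    with htdef
  have ht_eq : ∀ n, t n = (((2*(n+1)+1).factorial : ℝ))⁻¹ * ‖kChain k (n+1) p‖ := by
    intro n
    rw [htdef]
    simp only [norm_mul, norm_inv, Complex.norm_natCast]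
  have hfac_pos : ∀ n : ℕ, (0:ℝ) < ((2*(n+1)+1).factorial : ℝ) := fun n => by
    exact_mod_cast Nat.factorial_pos _
  have hle : ∀ n, t n ≤ (M ^ 2 / L ^ 2) * d (n+1) := by
    intro n
    rw [ht_eq n, hddef]
    have : (M ^ 2 / L ^ 2) * (L ^ (2*(n+1)+1) / ((2*(n+1)+1).factorial : ℝ)) =
        (((2*(n+1)+1).factorial : ℝ))⁻¹ * (M ^ 2 * L ^ (2*n+1)) := by
      have hpow : L ^ (2*(n+1)+1) = L ^ (2*n+1) * L ^ 2 := by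
        rw [← pow_add]; ring_nf
      field_simp [hpow, (hfac_pos n).ne', hL0.ne']
      ring
    rw [this]
    exact mul_le_mul_of_nonneg_left (hp n) (by positivity)
  have hsum_bound : Summable (fun n => (M ^ 2 / L ^ 2) * d (n+1)) := hde.mul_left _
  have hsumt : Summable t :=
    Summable.of_nonneg_of_le (fun n => norm_nonneg _) hle hsum_bound
  refine ⟨hsumt, ?_⟩
  calc ‖∑' n : ℕ, ((Nat.factorial (2 * (n + 1) + 1) : ℂ))⁻¹ * kChain k (n + 1) p‖
      ≤ ∑' n, t n := norm_tsum_le_tsum_norm hsumt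
    _ ≤ ∑' n, (M ^ 2 / L ^ 2) * d (n+1) := Summable.tsum_le_tsum hle hsumt hsum_bound
    _ = (M ^ 2 / L ^ 2) * (Real.sinh L - L) := by rw [tsum_mul_left, hdsum]
    _ = M ^ 2 * (Real.sinh L - L) / L ^ 2 := by ring
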